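/- Let $M$ be a connected $2$-polymatroid and let $N$ be a connected minor of $M$ with $N \neq M$. Then there is an element $e \in E(M) - E(N)$ such that $M\backslash e$ or $M/e$ is connected and has $N$ as a minor. -/

import Mathlib

/-- Connectivity of a polymatroid with rank function `r` and ground set `F`. -/
def Conn {α : Type*} [DecidableEq α] (r : Finset α → ℤ) (F : Finset α) : Prop :=
  ∀ X ⊆ F, X ≠ ∅ → X ≠ F → r X + r (F \ X) ≠ r F

/-- `(F, s)` is a minor of the polymatroid `(E, r)`: it is obtained by contracting a set
`C` and deleting a set `D`. -/
def IsMinor {α : Type*} [DecidableEq α] (r : Finset α → ℤ) (E : Finset α)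
    (s : Finset α → ℤ) (F : Finset α) : Prop :=
  ∃ C D : Finset α, C ⊆ E ∧ D ⊆ E ∧ Disjoint C D ∧ F = E \ (C ∪ D) ∧
    ∀ X ⊆ F, s X = r (X ∪ C) - r C

namespace Splitter

variable {α : Type*} [DecidableEq α]

/-- Polymatroid axioms. -/
structure PM (r : Finset α → ℤ) : Prop where
  zero : r ∅ = 0
  mono : ∀ X Y : Finset α, X ⊆ Y → r X ≤ r Y
  sub : ∀ X Y : Finset α, r (X ∪ Y) + r (X ∩ Y) ≤ r X + r Y

lemma PM.nonneg {r : Finset α → ℤ} (h : PM r) (X : Finset α) : 0 ≤ r X := by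
  have := h.mono ∅ X (Finset.empty_subset X); rw [h.zero] at this; exact this

lemma PM.submod {r : Finset α → ℤ} (h : PM r) (X Y : Finset α) :
    r (X ∪ Y) ≤ r X + r Y := by
  have := h.sub X Y
  have := h.nonneg (X ∩ Y)
  linarith

/-- local connectivity -/
def m (r : Finset α → ℤ) (A B : Finset α) : ℤ := r A + r B - r (A ∪ B)

lemma m_nonneg {r : Finset α → ℤ} (h : PM r) (A B : Finset α) : 0 ≤ m r A B := by
  have := h.submod A B; unfold m; linarith

lemma m_comm (r : Finset α → ℤ) (A B : Finset α) : m r A B = m r B A := by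
  unfold m; rw [Finset.union_comm]; ring

lemma m_mono_right {r : Finset α → ℤ} (h : PM r) {B B' : Finset α} (A : Finset α)
    (hB : B ⊆ B') : m r A B ≤ m r A B' := by
  unfold m
  have h1 := h.sub (A ∪ B) B'
  have h2 : B ⊆ (A ∪ B) ∩ B' := Finset.subset_inter (Finset.subset_union_right) hB
  have h3 := h.mono _ _ h2
  have h4 : A ∪ B' ⊆ A ∪ B ∪ B' := by
    intro a ha; rw [Finset.mem_union] at ha ⊢
    rcases ha with ha | ha
    · exact Or.inl (Finset.mem_union_left _ ha)
    · exact Or.inr ha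
  have h5 := h.mono _ _ h4
  linarith

lemma m_mono {r : Finset α → ℤ} (h : PM r) {A A' B B' : Finset α}
    (hA : A ⊆ A') (hB : B ⊆ B') : m r A B ≤ m r A' B' := by
  calc m r A B ≤ m r A B' := m_mono_right h A hB
    _ = m r B' A := m_comm r A B'
    _ ≤ m r B' A' := m_mono_right h B' hA
    _ = m r A' B' := m_comm r B' A'

lemma m_subadd {r : Finset α → ℤ} (h : PM r) (A S T : Finset α) :
    m r A (S ∪ T) ≤ m r A S + m r (A ∪ S) T := by
  unfold m
  have h1 := h.submod S T
  have h2 : A ∪ (S ∪ T) = A ∪ S ∪ T := (Finset.union_assoc A S T).symm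
  rw [h2]; linarith

/-- contraction of one element -/
def ctr (r : Finset α → ℤ) (x : α) : Finset α → ℤ := fun X => r (X ∪ {x}) - r {x}

lemma PM.ctr {r : Finset α → ℤ} (h : PM r) (x : α) : PM (ctr r x) := by
  constructor
  · show r (∅ ∪ {x}) - r {x} = 0
    rw [Finset.empty_union]; ring
  · intro X Y hXY
    have : X ∪ {x} ⊆ Y ∪ {x} := Finset.union_subset_union_left hXY
    have := h.mono _ _ this
    show r (X ∪ {x}) - r {x} ≤ r (Y ∪ {x}) - r {x}
    linarith
  · intro X Y
    show r (X ∪ Y ∪ {x}) - r {x} + (r (X ∩ Y ∪ {x}) - r {x}) ≤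
      (r (X ∪ {x}) - r {x}) + (r (Y ∪ {x}) - r {x})
    have h1 := h.sub (X ∪ {x}) (Y ∪ {x})
    have h2 : (X ∪ {x}) ∪ (Y ∪ {x}) = X ∪ Y ∪ {x} := by
      ext a; simp [Finset.mem_union]
    have h3 : X ∩ Y ∪ {x} ⊆ (X ∪ {x}) ∩ (Y ∪ {x}) := by
      intro a ha; simp [Finset.mem_union, Finset.mem_inter] at ha ⊢; tauto
    have h4 := h.mono _ _ h3
    rw [h2] at h1
    linarith

lemma m_ctr_le {r : Finset α → ℤ} (h : PM r) (x : α) (S T : Finset α) :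
    m (ctr r x) S T ≤ m r (S ∪ {x}) T := by
  unfold m ctr
  have h1 : S ∪ T ∪ {x} = (S ∪ {x}) ∪ T := Finset.union_right_comm S T {x}
  have h2 := h.submod T {x}
  rw [h1]
  linarith

/-- λ(S) over complement T∪{x} splits: m r S (T ∪ {x}) = m (ctr r x) S T + m r S {x} -/
lemma m_ctr_split {r : Finset α → ℤ} (S T : Finset α) (x : α) :
    m r S (T ∪ {x}) = m (ctr r x) S T + m r S {x} := by
  unfold m ctr
  have h1 : S ∪ (T ∪ {x}) = S ∪ T ∪ {x} := (Finset.union_assoc S T {x}).symm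
  rw [h1]; ring

lemma isMinor_ground {ρ σ : Finset α → ℤ} {G F : Finset α} (h : IsMinor ρ G σ F) :
    F ⊆ G := by
  obtain ⟨C, D, _, _, _, hF, _⟩ := h
  subst hF; exact Finset.sdiff_subset

/-- connectivity of a minor does not exceed connectivity of the host. -/
lemma lam_minor : ∀ (n : ℕ) (ρ σ : Finset α → ℤ) (G F : Finset α), PM ρ →
    IsMinor ρ G σ F → (G \ F).card ≤ n → ∀ X ⊆ G,
    σ (F ∩ X) + σ (F \ X) - σ F ≤ ρ X + ρ (G \ X) - ρ G := by
  intro n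
  induction n with
  | zero =>
    intro ρ σ G F hPM hM hcard X hX
    obtain ⟨C, D, hC, hD, hCD, hF, hEq⟩ := hM
    have hGF : G \ F = C ∪ D := by
      subst hF
      ext a
      simp only [Finset.mem_sdiff, Finset.mem_union]
      constructor
      · tauto
      · intro ha
        rcases ha with ha | ha
        · exact ⟨hC ha, by tauto⟩
        · exact ⟨hD ha, by tauto⟩
    rw [hGF] at hcard
    have hCD0 : C ∪ D = ∅ := Finset.card_eq_zero.mp (Nat.le_zero.mp hcard)
    have hC0 : C = ∅ := by
      have := Finset.union_eq_empty.mp hCD0; exact this.1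
    have hD0 : D = ∅ := by
      have := Finset.union_eq_empty.mp hCD0; exact this.2
    have hFG : F = G := by rw [hF, hCD0, Finset.sdiff_empty]
    subst hFG
    have e1 : σ (F ∩ X) = ρ (F ∩ X) := by
      rw [hEq (F ∩ X) Finset.inter_subset_left, hC0, Finset.union_empty, hPM.zero]; ring
    have e2 : σ (F \ X) = ρ (F \ X) := by
      rw [hEq (F \ X) Finset.sdiff_subset, hC0, Finset.union_empty, hPM.zero]; ring
    have e3 : σ F = ρ F := by
      rw [hEq F (subset_refl F), hC0, Finset.union_empty, hPM.zero]; ring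
    have e4 : F ∩ X = X := Finset.inter_eq_right.mpr hX
    rw [e1, e2, e3, e4]
  | succ n ih =>
    intro ρ σ G F hPM hM hcard X hX
    obtain ⟨C, D, hC, hD, hCD, hF, hEq⟩ := hM
    have hGF : G \ F = C ∪ D := by
      subst hF
      ext a
      simp only [Finset.mem_sdiff, Finset.mem_union]
      constructor
      · tauto
      · intro ha
        rcases ha with ha | ha
        · exact ⟨hC ha, by tauto⟩
        · exact ⟨hD ha, by tauto⟩
    by_cases hCD0 : C ∪ D = ∅
    · -- trivial case again
      have hC0 : C = ∅ := (Finset.union_eq_empty.mp hCD0).1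
      have hFG : F = G := by rw [hF, hCD0, Finset.sdiff_empty]
      subst hFG
      have e1 : σ (F ∩ X) = ρ (F ∩ X) := by
        rw [hEq (F ∩ X) Finset.inter_subset_left, hC0, Finset.union_empty, hPM.zero]; ring
      have e2 : σ (F \ X) = ρ (F \ X) := by
        rw [hEq (F \ X) Finset.sdiff_subset, hC0, Finset.union_empty, hPM.zero]; ring
      have e3 : σ F = ρ F := by
        rw [hEq F (subset_refl F), hC0, Finset.union_empty, hPM.zero]; ring
      have e4 : F ∩ X = X := Finset.inter_eq_right.mpr hX
      rw [e1, e2, e3, e4]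
    · obtain ⟨t, ht⟩ := Finset.nonempty_iff_ne_empty.mpr hCD0
      have htG : t ∈ G := by
        rcases Finset.mem_union.mp ht with h | h
        · exact hC h
        · exact hD h
      have htF : t ∉ F := by
        rw [hF]; simp only [Finset.mem_sdiff]; tauto
      -- common facts
      have hFt : F ⊆ G \ {t} := by
        intro a ha
        simp only [Finset.mem_sdiff, Finset.mem_singleton]
        have haG : a ∈ G := by rw [hF] at ha; exact (Finset.mem_sdiff.mp ha).1
        exact ⟨haG, fun h => htF (h ▸ ha)⟩
      have hcard' : ((G \ {t}) \ F).card ≤ n := by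
        have h1 : (G \ {t}) \ F = (G \ F).erase t := by
          ext a
          simp only [Finset.mem_sdiff, Finset.mem_singleton, Finset.mem_erase]
          tauto
        rw [h1, Finset.card_erase_of_mem (by rw [hGF]; exact ht)]
        rw [hGF] at hcard ⊢
        omega
      have hFiX : F ∩ (X \ {t}) = F ∩ X := by
        ext a
        simp only [Finset.mem_inter, Finset.mem_sdiff, Finset.mem_singleton]
        constructor
        · tauto
        · intro ⟨h1, h2⟩; exact ⟨h1, h2, fun h => htF (h ▸ h1)⟩
      have hFdX : F \ (X \ {t}) = F \ X := by
        ext a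
        simp only [Finset.mem_sdiff, Finset.mem_singleton]
        constructor
        · intro ⟨h1, h2⟩
          refine ⟨h1, fun hx => h2 ⟨hx, fun h => htF (h ▸ h1)⟩⟩
        · tauto
      have hXt : X \ {t} ⊆ G \ {t} := by
        intro a ha
        simp only [Finset.mem_sdiff, Finset.mem_singleton] at ha ⊢
        exact ⟨hX ha.1, ha.2⟩
      rcases Finset.mem_union.mp ht with htC | htD
      · -- t ∈ C : contract t
        have hM' : IsMinor (ctr ρ t) (G \ {t}) σ F := by
          refine ⟨C.erase t, D, ?_, ?_, ?_, ?_, ?_⟩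
          · intro a ha
            rw [Finset.mem_erase] at ha
            simp only [Finset.mem_sdiff, Finset.mem_singleton]
            exact ⟨hC ha.2, ha.1⟩
          · intro a ha
            simp only [Finset.mem_sdiff, Finset.mem_singleton]
            refine ⟨hD ha, fun h => ?_⟩
            exact (Finset.disjoint_left.mp hCD) htC (h ▸ ha)
          · exact Finset.disjoint_of_subset_left (Finset.erase_subset t C) hCD
          · rw [hF]
            ext a
            simp only [Finset.mem_sdiff, Finset.mem_union, Finset.mem_erase,
              Finset.mem_singleton]
            constructor
            · intro ⟨h1, h2⟩
              have hat : a ≠ t := fun h => h2 (Or.inl (h ▸ htC))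
              tauto
            · tauto
          · intro T hT
            have h1 : T ∪ C.erase t ∪ {t} = T ∪ C := by
              ext a
              simp only [Finset.mem_union, Finset.mem_erase, Finset.mem_singleton]
              constructor
              · intro h
                rcases h with (h | h) | h
                · tauto
                · tauto
                · exact Or.inr (h ▸ htC)
              · intro h
                rcases h with h | h
                · tauto
                · by_cases hat : a = t
                  · tauto
                  · tauto
            have h2 : C.erase t ∪ {t} = C := by
              ext a
              simp only [Finset.mem_union, Finset.mem_erase, Finset.mem_singleton]
              constructor
              · intro h
                rcases h with h | h
                · tauto
                · exact h ▸ htC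
              · intro h
                by_cases hat : a = t
                · tauto
                · tauto
            show σ T = ρ (T ∪ C.erase t ∪ {t}) - ρ {t} - (ρ (C.erase t ∪ {t}) - ρ {t})
            rw [h1, h2, hEq T hT]; ring
        have hIH := ih (ctr ρ t) σ (G \ {t}) F (hPM.ctr t) hM' hcard' (X \ {t}) hXt
        rw [hFiX, hFdX] at hIH
        unfold ctr at hIH
        by_cases htX : t ∈ X
        · have e1 : X \ {t} ∪ {t} = X :=
            Finset.sdiff_union_of_subset (Finset.singleton_subset_iff.mpr htX)
          have e2 : (G \ {t}) \ (X \ {t}) = G \ X := by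
            ext a
            simp only [Finset.mem_sdiff, Finset.mem_singleton]
            constructor
            · intro ⟨⟨h1, h2⟩, h3⟩
              exact ⟨h1, fun hx => h3 ⟨hx, h2⟩⟩
            · intro ⟨h1, h2⟩
              exact ⟨⟨h1, fun h => h2 (h ▸ htX)⟩, fun h => h2 h.1⟩
          have e3 : (G \ {t}) ∪ {t} = G :=
            Finset.sdiff_union_of_subset (Finset.singleton_subset_iff.mpr htG)
          rw [e1, e2, e3] at hIH
          have h5 := hPM.submod (G \ X) {t}
          linarith
        · have e1 : X \ {t} = X := by
            ext a
            simp only [Finset.mem_sdiff, Finset.mem_singleton]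
            exact ⟨fun h => h.1, fun h => ⟨h, fun he => htX (he ▸ h)⟩⟩
          have e2 : (G \ {t}) \ X = (G \ X) \ {t} := by
            ext a
            simp only [Finset.mem_sdiff, Finset.mem_singleton]
            tauto
          have e3 : (G \ X) \ {t} ∪ {t} = G \ X :=
            Finset.sdiff_union_of_subset (Finset.singleton_subset_iff.mpr
              (Finset.mem_sdiff.mpr ⟨htG, htX⟩))
          have e4 : (G \ {t}) ∪ {t} = G :=
            Finset.sdiff_union_of_subset (Finset.singleton_subset_iff.mpr htG)
          rw [e1, e2, e3, e4] at hIH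
          have h5 := hPM.submod X {t}
          linarith
      · -- t ∈ D : delete t
        have hM' : IsMinor ρ (G \ {t}) σ F := by
          refine ⟨C, D.erase t, ?_, ?_, ?_, ?_, ?_⟩
          · intro a ha
            simp only [Finset.mem_sdiff, Finset.mem_singleton]
            refine ⟨hC ha, fun h => ?_⟩
            exact (Finset.disjoint_left.mp hCD) (h ▸ ha) htD
          · intro a ha
            rw [Finset.mem_erase] at ha
            simp only [Finset.mem_sdiff, Finset.mem_singleton]
            exact ⟨hD ha.2, ha.1⟩
          · exact Finset.disjoint_of_subset_right (Finset.erase_subset t D) hCD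
          · rw [hF]
            ext a
            simp only [Finset.mem_sdiff, Finset.mem_union, Finset.mem_erase,
              Finset.mem_singleton]
            constructor
            · intro ⟨h1, h2⟩
              have hat : a ≠ t := fun h => h2 (Or.inr (h ▸ htD))
              tauto
            · tauto
          · exact hEq
        have hIH := ih ρ σ (G \ {t}) F hPM hM' hcard' (X \ {t}) hXt
        rw [hFiX, hFdX] at hIH
        by_cases htX : t ∈ X
        · have e2 : (G \ {t}) \ (X \ {t}) = G \ X := by
            ext a
            simp only [Finset.mem_sdiff, Finset.mem_singleton]
            constructor
            · intro ⟨⟨h1, h2⟩, h3⟩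
              exact ⟨h1, fun hx => h3 ⟨hx, h2⟩⟩
            · intro ⟨h1, h2⟩
              exact ⟨⟨h1, fun h => h2 (h ▸ htX)⟩, fun h => h2 h.1⟩
          rw [e2] at hIH
          -- submod (X, G\{t}) : union = G, inter = X \ {t}
          have h5 := hPM.sub X (G \ {t})
          have e3 : X ∪ (G \ {t}) = G := by
            ext a
            by_cases hat : a = t
            · subst hat
              simp only [Finset.mem_union, Finset.mem_sdiff, Finset.mem_singleton]
              tauto
            · simp only [Finset.mem_union, Finset.mem_sdiff, Finset.mem_singleton, hat]
              constructor
              · rintro (h | h)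
                · exact hX h
                · exact h.1
              · intro h; tauto
          have e4 : X ∩ (G \ {t}) = X \ {t} := by
            ext a
            simp only [Finset.mem_inter, Finset.mem_sdiff, Finset.mem_singleton]
            exact ⟨fun h => ⟨h.1, h.2.2⟩, fun h => ⟨h.1, hX h.1, h.2⟩⟩
          rw [e3, e4] at h5
          linarith
        · have e1 : X \ {t} = X := by
            ext a
            simp only [Finset.mem_sdiff, Finset.mem_singleton]
            exact ⟨fun h => h.1, fun h => ⟨h, fun he => htX (he ▸ h)⟩⟩
          have e2 : (G \ {t}) \ X = (G \ X) \ {t} := by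
            ext a
            simp only [Finset.mem_sdiff, Finset.mem_singleton]
            tauto
          rw [e1, e2] at hIH
          have h5 := hPM.sub (G \ {t}) (G \ X)
          have e3 : (G \ {t}) ∪ (G \ X) = G := by
            ext a
            by_cases hat : a = t
            · subst hat
              simp only [Finset.mem_union, Finset.mem_sdiff, Finset.mem_singleton]
              tauto
            · simp only [Finset.mem_union, Finset.mem_sdiff, Finset.mem_singleton, hat]
              tauto
          have e4 : (G \ {t}) ∩ (G \ X) = (G \ X) \ {t} := by
            ext a
            simp only [Finset.mem_inter, Finset.mem_sdiff, Finset.mem_singleton]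
            tauto
          rw [e3, e4] at h5
          linarith

/-- submodularity of the minor's rank across a split of F -/
lemma sigma_super {ρ σ : Finset α → ℤ} {G F : Finset α} (hPM : PM ρ)
    (hM : IsMinor ρ G σ F) (A : Finset α) (hA : A ⊆ F) :
    σ F ≤ σ A + σ (F \ A) := by
  obtain ⟨C, D, hC, hD, hCD, hF, hEq⟩ := hM
  rw [hEq A hA, hEq (F \ A) Finset.sdiff_subset, hEq F (subset_refl F)]
  have h1 := hPM.sub (A ∪ C) ((F \ A) ∪ C)
  have e1 : (A ∪ C) ∪ ((F \ A) ∪ C) = F ∪ C := by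
    ext a
    simp only [Finset.mem_union, Finset.mem_sdiff]
    constructor
    · tauto
    · intro h
      rcases h with h | h
      · by_cases haA : a ∈ A
        · tauto
        · tauto
      · tauto
  have e2 : (A ∪ C) ∩ ((F \ A) ∪ C) = C := by
    ext a
    simp only [Finset.mem_inter, Finset.mem_union, Finset.mem_sdiff]
    tauto
  rw [e1, e2] at h1
  linarith

/-- If the minor is connected, any separation of the host has F on one side. -/
lemma Fside {ρ σ : Finset α → ℤ} {G F : Finset α} (hPM : PM ρ)
    (hM : IsMinor ρ G σ F) (hconn : Conn σ F) (X : Finset α) (hX : X ⊆ G)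
    (heq : ρ X + ρ (G \ X) = ρ G) : F ∩ X = ∅ ∨ F ⊆ X := by
  by_contra hcon
  push_neg at hcon
  obtain ⟨h1, h2⟩ := hcon
  have hlam := lam_minor (G \ F).card ρ σ G F hPM hM (le_refl _) X hX
  have hsup := sigma_super hPM hM (F ∩ X) Finset.inter_subset_left
  have e1 : F \ (F ∩ X) = F \ X := by
    ext a
    simp only [Finset.mem_sdiff, Finset.mem_inter]
    tauto
  rw [e1] at hsup
  have hFX : F ∩ X ≠ F := by
    intro h
    exact h2 (Finset.inter_eq_left.mp h)
  exact hconn (F ∩ X) Finset.inter_subset_left (Finset.nonempty_iff_ne_empty.mp h1) hFX (by rw [e1]; linarith)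

/-- deletion certificate: `M\g` is disconnected with the separation `(Z,W)`,
`F ⊆ W`, and `N` is a minor of `M\g`. -/
def DelCert (r s : Finset α → ℤ) (E F : Finset α) (g : α) (Z W : Finset α) : Prop :=
  g ∈ E ∧ E \ {g} = Z ∪ W ∧ Disjoint Z W ∧ Z.Nonempty ∧ W.Nonempty ∧ F ⊆ W ∧
  r Z + r W = r (E \ {g}) ∧ IsMinor r (E \ {g}) s F

/-- contraction certificate. -/
def ConCert (r s : Finset α → ℤ) (E F : Finset α) (g : α) (Z W : Finset α) : Prop :=
  g ∈ E ∧ E \ {g} = Z ∪ W ∧ Disjoint Z W ∧ Z.Nonempty ∧ W.Nonempty ∧ F ⊆ W ∧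
  r (Z ∪ {g}) + r (W ∪ {g}) = r E + r {g} ∧ IsMinor (ctr r g) (E \ {g}) s F

/-- transfer of the minor across a deletion certificate -/
lemma transfer {r s : Finset α → ℤ} {E F : Finset α} (hPM : PM r) {g : α} {Z W : Finset α}
    (hgE : g ∈ E) (hpart : E \ {g} = Z ∪ W) (hFW : F ⊆ W)
    (hzero : r Z + r W = r (E \ {g})) (hM : IsMinor r (E \ {g}) s F)
    {x : α} (hx : x ∈ Z) (hxW : x ∉ W) :
    IsMinor r (E \ {x}) s F ∧ IsMinor (ctr r x) (E \ {x}) s F := by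
  obtain ⟨C', D', hC', hD', hdisj', hFeq, hEq⟩ := hM
  have hZE : Z ⊆ E \ {g} := by rw [hpart]; exact Finset.subset_union_left
  have hWE : W ⊆ E \ {g} := by rw [hpart]; exact Finset.subset_union_right
  have hxE : x ∈ E := (Finset.mem_sdiff.mp (hZE hx)).1
  have hxF : x ∉ F := fun h => hxW (hFW h)
  have hmZW : m r Z W = 0 := by
    unfold m; rw [← hpart]; linarith
  have hFE' : F ⊆ E \ {g} := fun a ha => hWE (hFW ha)
  have hCF : ∀ a ∈ C', a ∉ F := by
    intro a ha hFa
    rw [hFeq] at hFa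
    exact (Finset.mem_sdiff.mp hFa).2 (Finset.mem_union_left _ ha)
  set K := C' ∩ W with hK
  have hKW : K ⊆ W := Finset.inter_subset_right
  have hKx : x ∉ K := fun h => hxW (hKW h)
  have hKE : K ⊆ E := fun a ha => (Finset.mem_sdiff.mp (hWE (hKW ha))).1
  have key : ∀ T ⊆ F, s T = r (T ∪ K) - r K := by
    intro T hT
    have hTW : T ∪ K ⊆ W := Finset.union_subset (hT.trans hFW) hKW
    have hmz : m r (C' ∩ Z) (T ∪ K) = 0 :=
      le_antisymm (le_of_le_of_eq (m_mono hPM Finset.inter_subset_right hTW) hmZW)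
        (m_nonneg hPM _ _)
    have hmz0 : m r (C' ∩ Z) K = 0 :=
      le_antisymm (le_of_le_of_eq (m_mono hPM Finset.inter_subset_right hKW) hmZW)
        (m_nonneg hPM _ _)
    have hsplit : T ∪ C' = (C' ∩ Z) ∪ (T ∪ K) := by
      ext a
      simp only [hK, Finset.mem_union, Finset.mem_inter]
      constructor
      · intro h
        rcases h with h | h
        · tauto
        · have := hC' h
          rw [hpart, Finset.mem_union] at this
          rcases this with h2 | h2
          · exact Or.inl ⟨h, h2⟩
          · exact Or.inr (Or.inr ⟨h, h2⟩)
      · tauto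
    have hsplit0 : C' = (C' ∩ Z) ∪ K := by
      ext a
      simp only [hK, Finset.mem_union, Finset.mem_inter]
      constructor
      · intro h
        have := hC' h
        rw [hpart, Finset.mem_union] at this
        tauto
      · tauto
    have e1 : r (T ∪ C') = r (C' ∩ Z) + r (T ∪ K) := by
      unfold m at hmz; rw [← hsplit] at hmz; linarith
    have e2 : r C' = r (C' ∩ Z) + r K := by
      unfold m at hmz0; rw [← hsplit0] at hmz0; linarith
    rw [hEq T hT, e1, e2]; ring
  -- common pieces for both minors
  have hKEx : K ⊆ E \ {x} := by
    intro a ha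
    exact Finset.mem_sdiff.mpr ⟨hKE ha, fun h =>
      hKx ((Finset.mem_singleton.mp h) ▸ ha)⟩
  have hFEx : F ⊆ E \ {x} := by
    intro a ha
    refine Finset.mem_sdiff.mpr ⟨(Finset.mem_sdiff.mp (hFE' ha)).1, fun h => ?_⟩
    exact hxF ((Finset.mem_singleton.mp h) ▸ ha)
  have hKF : ∀ a ∈ K, a ∉ F := fun a ha => hCF a (Finset.mem_of_mem_inter_left ha)
  have hFnew : F = (E \ {x}) \ (K ∪ ((E \ {x}) \ (F ∪ K))) := by
    ext a
    simp only [Finset.mem_sdiff, Finset.mem_union, Finset.mem_singleton]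
    constructor
    · intro ha
      have h1 := hFEx ha
      rw [Finset.mem_sdiff, Finset.mem_singleton] at h1
      refine ⟨h1, fun h => ?_⟩
      rcases h with h | h
      · exact hKF a h ha
      · exact h.2 (Or.inl ha)
    · intro ⟨h1, h2⟩
      by_cases hFa : a ∈ F
      · exact hFa
      · exfalso
        apply h2
        right
        exact ⟨⟨h1.1, h1.2⟩, fun h => by tauto⟩
  have hdisjnew : Disjoint K ((E \ {x}) \ (F ∪ K)) := by
    rw [Finset.disjoint_left]
    intro a ha h2
    rw [Finset.mem_sdiff, Finset.mem_union] at h2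
    exact h2.2 (Or.inr ha)
  constructor
  · exact ⟨K, (E \ {x}) \ (F ∪ K), hKEx, Finset.sdiff_subset, hdisjnew, hFnew, key⟩
  · refine ⟨K, (E \ {x}) \ (F ∪ K), hKEx, Finset.sdiff_subset, hdisjnew, hFnew, ?_⟩
    intro T hT
    have hTW : T ∪ K ⊆ W := Finset.union_subset (hT.trans hFW) hKW
    have hm1 : m r {x} (T ∪ K) = 0 :=
      le_antisymm (le_of_le_of_eq
        (m_mono hPM (Finset.singleton_subset_iff.mpr hx) hTW) hmZW)
        (m_nonneg hPM _ _)
    have hm2 : m r {x} K = 0 :=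
      le_antisymm (le_of_le_of_eq
        (m_mono hPM (Finset.singleton_subset_iff.mpr hx) hKW) hmZW)
        (m_nonneg hPM _ _)
    unfold m at hm1 hm2
    have e1 : {x} ∪ (T ∪ K) = T ∪ K ∪ {x} := by
      rw [Finset.union_comm]
    have e2 : {x} ∪ K = K ∪ {x} := Finset.union_comm _ _
    rw [e1] at hm1
    rw [e2] at hm2
    show s T = r (T ∪ K ∪ {x}) - r {x} - (r (K ∪ {x}) - r {x})
    rw [key T hT]
    linarith

/-- the heart of the argument: a corner of a contraction-separation at `x ∈ Z`
either violates minimality or produces a separation of `M` itself. -/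
lemma core_aux {r s : Finset α → ℤ} {E F : Finset α} (hPM : PM r) (hMconn : Conn r E)
    {g : α} {Z W : Finset α}
    (hgE : g ∈ E) (hpart : E \ {g} = Z ∪ W) (hdisj : Disjoint Z W)
    (hFW : F ⊆ W) (hzero : r Z + r W = r (E \ {g}))
    (hmin : ∀ g' Z' W', DelCert r s E F g' Z' W' ∨ ConCert r s E F g' Z' W' →
      Z.card ≤ Z'.card)
    {x : α} (hx : x ∈ Z)
    (hM2 : IsMinor (ctr r x) (E \ {x}) s F)
    {S T : Finset α}
    (hpart2 : E \ {x} = S ∪ T) (hdisjST : Disjoint S T)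
    (hSne : S.Nonempty) (hgT : g ∈ T)
    (heq : r (S ∪ {x}) + r (T ∪ {x}) = r E + r {x}) : False := by
  have hZE : Z ⊆ E \ {g} := by rw [hpart]; exact Finset.subset_union_left
  have hWE : W ⊆ E \ {g} := by rw [hpart]; exact Finset.subset_union_right
  have hxE : x ∈ E := (Finset.mem_sdiff.mp (hZE hx)).1
  have hxg : x ≠ g := fun h => (Finset.mem_sdiff.mp (hZE hx)).2 (Finset.mem_singleton.mpr h)
  have hxW : x ∉ W := Finset.disjoint_left.mp hdisj hx
  have hxF : x ∉ F := fun h => hxW (hFW h)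
  have hgZ : g ∉ Z := fun h => (Finset.mem_sdiff.mp (hZE h)).2 (Finset.mem_singleton.mpr rfl)
  have hgW : g ∉ W := fun h => (Finset.mem_sdiff.mp (hWE h)).2 (Finset.mem_singleton.mpr rfl)
  have hSE : S ⊆ E \ {x} := by rw [hpart2]; exact Finset.subset_union_left
  have hTE : T ⊆ E \ {x} := by rw [hpart2]; exact Finset.subset_union_right
  have hgS : g ∉ S := Finset.disjoint_right.mp hdisjST hgT
  have hxS : x ∉ S := fun h => (Finset.mem_sdiff.mp (hSE h)).2 (Finset.mem_singleton.mpr rfl)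
  have hxT : x ∉ T := fun h => (Finset.mem_sdiff.mp (hTE h)).2 (Finset.mem_singleton.mpr rfl)
  have hmZW : m r Z W = 0 := by unfold m; rw [← hpart]; linarith
  set B := Z ∩ S with hB
  by_cases hBe : B = ∅
  · -- then S ⊆ W and S is a separator of M
    have hSW : S ⊆ W := by
      intro a ha
      have haE : a ∈ E \ {x} := hSE ha
      rw [Finset.mem_sdiff, Finset.mem_singleton] at haE
      have haZ : a ∉ Z := by
        intro h
        have : a ∈ B := Finset.mem_inter.mpr ⟨h, ha⟩
        rw [hBe] at this
        exact absurd this (Finset.notMem_empty a)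
      have hag : a ≠ g := fun h => hgS (h ▸ ha)
      have : a ∈ E \ {g} := Finset.mem_sdiff.mpr ⟨haE.1, fun h =>
        hag (Finset.mem_singleton.mp h)⟩
      rw [hpart, Finset.mem_union] at this
      tauto
    have hm0 : m r S {x} = 0 := by
      refine le_antisymm ?_ (m_nonneg hPM _ _)
      have h1 := m_mono hPM hSW (Finset.singleton_subset_iff.mpr hx)
      rw [m_comm r Z W] at hmZW
      exact le_of_le_of_eq h1 hmZW
    unfold m at hm0
    have hES : E \ S = T ∪ {x} := by
      ext a
      simp only [Finset.mem_sdiff, Finset.mem_union, Finset.mem_singleton]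
      constructor
      · intro ⟨h1, h2⟩
        by_cases hax : a = x
        · tauto
        · have : a ∈ E \ {x} := Finset.mem_sdiff.mpr ⟨h1, fun h =>
            hax (Finset.mem_singleton.mp h)⟩
          rw [hpart2, Finset.mem_union] at this
          tauto
      · intro h
        rcases h with h | h
        · have := hTE h
          rw [Finset.mem_sdiff] at this
          exact ⟨this.1, Finset.disjoint_right.mp hdisjST h⟩
        · exact ⟨h ▸ hxE, fun hS => hxS (h ▸ hS)⟩
    have hSneE : S ≠ E := by
      intro h
      exact hxS (h ▸ hxE)
    refine hMconn S (fun a ha => (Finset.mem_sdiff.mp (hSE ha)).1)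
      (Finset.nonempty_iff_ne_empty.mp hSne) hSneE ?_
    rw [hES]
    linarith
  · -- corner gives a smaller contraction certificate
    have hBne : B.Nonempty := Finset.nonempty_iff_ne_empty.mpr hBe
    have hBZ : B ⊆ Z := Finset.inter_subset_left
    have hBS : B ⊆ S := Finset.inter_subset_right
    have hxB : x ∉ B := fun h => hxS (hBS h)
    have hBssZ : B ⊂ Z := by
      refine Finset.ssubset_iff_of_subset hBZ |>.mpr ⟨x, hx, hxB⟩
    have hBcard : B.card < Z.card := Finset.card_lt_card hBssZ
    have hBwW : S \ B ⊆ W := by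
      intro a ha
      rw [Finset.mem_sdiff] at ha
      obtain ⟨haS, haB⟩ := ha
      have haZ : a ∉ Z := fun h => haB (Finset.mem_inter.mpr ⟨h, haS⟩)
      have haE := hSE haS
      rw [Finset.mem_sdiff, Finset.mem_singleton] at haE
      have hag : a ≠ g := fun h => hgS (h ▸ haS)
      have : a ∈ E \ {g} := Finset.mem_sdiff.mpr ⟨haE.1, fun h =>
        hag (Finset.mem_singleton.mp h)⟩
      rw [hpart, Finset.mem_union] at this
      tauto
    have hrest : (E \ {x}) \ B = (S \ B) ∪ T := by
      ext a
      simp only [Finset.mem_sdiff, Finset.mem_union, Finset.mem_singleton]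
      constructor
      · intro ⟨h1, h2⟩
        have : a ∈ S ∪ T := by
          rw [← hpart2]
          exact Finset.mem_sdiff.mpr ⟨h1.1, by simp [h1.2]⟩
        rw [Finset.mem_union] at this
        rcases this with h | h
        · exact Or.inl ⟨h, h2⟩
        · exact Or.inr h
      · intro h
        rcases h with h | h
        · have := hSE h.1
          rw [Finset.mem_sdiff, Finset.mem_singleton] at this
          exact ⟨⟨this.1, this.2⟩, h.2⟩
        · have := hTE h
          rw [Finset.mem_sdiff, Finset.mem_singleton] at this
          exact ⟨⟨this.1, this.2⟩, fun hB2 =>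
            (Finset.disjoint_right.mp hdisjST h) (hBS hB2)⟩
    -- the contraction certificate (x, B, (E\{x})\B)
    have hcert : ConCert r s E F x B ((E \ {x}) \ B) := by
      have hBEx : B ⊆ E \ {x} := fun a ha => hSE (hBS ha)
      refine ⟨hxE, (Finset.union_sdiff_of_subset hBEx).symm,
        Finset.disjoint_sdiff, hBne, ⟨g, ?_⟩, ?_, ?_, hM2⟩
      · rw [hrest, Finset.mem_union]
        exact Or.inr hgT
      · intro a ha
        rw [hrest, Finset.mem_union]
        by_cases haS : a ∈ S \ B
        · exact Or.inl haS
        · have haW := hFW ha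
          have haE : a ∈ E := (Finset.mem_sdiff.mp (hWE haW)).1
          have hax : a ≠ x := fun h => hxW (h ▸ haW)
          have haEx : a ∈ E \ {x} := Finset.mem_sdiff.mpr ⟨haE, fun h =>
            hax (Finset.mem_singleton.mp h)⟩
          rw [hpart2, Finset.mem_union] at haEx
          rcases haEx with h | h
          · exact Or.inl (Finset.mem_sdiff.mpr ⟨h, fun hB2 =>
              (Finset.disjoint_left.mp hdisj (hBZ hB2)) haW⟩)
          · exact Or.inr h
      · -- the rank equation
        have hsub1 := hPM.sub (B ∪ {x}) (((E \ {x}) \ B) ∪ {x})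
        have eU : (B ∪ {x}) ∪ (((E \ {x}) \ B) ∪ {x}) = E := by
          ext a
          simp only [Finset.mem_union, Finset.mem_sdiff, Finset.mem_singleton]
          constructor
          · intro h
            rcases h with (h | h) | (h | h)
            · exact (Finset.mem_sdiff.mp (hSE (hBS h))).1
            · exact h ▸ hxE
            · exact h.1.1
            · exact h ▸ hxE
          · intro h
            by_cases hax : a = x
            · tauto
            · by_cases haB : a ∈ B
              · tauto
              · exact Or.inr (Or.inl ⟨⟨h, hax⟩, haB⟩)
        have eI : (B ∪ {x}) ∩ (((E \ {x}) \ B) ∪ {x}) = {x} := by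
          ext a
          simp only [Finset.mem_inter, Finset.mem_union, Finset.mem_sdiff,
            Finset.mem_singleton]
          constructor
          · intro ⟨h1, h2⟩
            rcases h1 with h1 | h1
            · rcases h2 with h2 | h2
              · exact absurd h1 h2.2
              · exact h2
            · exact h1
          · intro h
            exact ⟨Or.inr h, Or.inr h⟩
        rw [eU, eI] at hsub1
        -- upper bound via the corner chain
        have hc1 := m_subadd (hPM.ctr x) B (S \ B) T
        have hBBw : B ∪ (S \ B) = S := Finset.union_sdiff_of_subset hBS
        rw [hBBw] at hc1
        have hc3 : m (ctr r x) S T = 0 := by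
          unfold m ctr
          have e1 : S ∪ T ∪ {x} = E := by
            rw [← hpart2]
            exact Finset.sdiff_union_of_subset (Finset.singleton_subset_iff.mpr hxE)
          rw [e1]
          linarith
        have hc4 := m_ctr_le hPM x B (S \ B)
        have hc5 : m r (B ∪ {x}) (S \ B) ≤ m r Z W := by
          refine m_mono hPM ?_ hBwW
          intro a ha
          rw [Finset.mem_union, Finset.mem_singleton] at ha
          rcases ha with h | h
          · exact hBZ h
          · exact h ▸ hx
        have hc7 := m_nonneg (hPM.ctr x) B ((E \ {x}) \ B)
        have hc8 : m (ctr r x) B ((S \ B) ∪ T) = m (ctr r x) B ((E \ {x}) \ B) := by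
          rw [hrest]
        rw [hc8] at hc1
        have hm0 : m (ctr r x) B ((E \ {x}) \ B) = 0 := by
          have h2 : m (ctr r x) B (S \ B) ≤ 0 := by
            calc m (ctr r x) B (S \ B) ≤ m r (B ∪ {x}) (S \ B) := hc4
              _ ≤ m r Z W := hc5
              _ = 0 := hmZW
          linarith
        unfold m ctr at hm0
        have e2 : B ∪ (E \ {x}) \ B = E \ {x} :=
          Finset.union_sdiff_of_subset (fun a ha => hSE (hBS ha))
        have e3 : B ∪ (E \ {x}) \ B ∪ {x} = E := by
          rw [e2]
          exact Finset.sdiff_union_of_subset (Finset.singleton_subset_iff.mpr hxE)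
        rw [e3] at hm0
        linarith
    have := hmin x B ((E \ {x}) \ B) (Or.inr hcert)
    omega

/-- Core lemma: the side of a minimum-size certificate can be contracted. -/
lemma core {r s : Finset α → ℤ} {E F : Finset α} (hPM : PM r) (hMconn : Conn r E)
    {g : α} {Z W : Finset α} (hcert : DelCert r s E F g Z W)
    (hmin : ∀ g' Z' W', DelCert r s E F g' Z' W' ∨ ConCert r s E F g' Z' W' →
      Z.card ≤ Z'.card)
    {x : α} (hx : x ∈ Z) : Conn (ctr r x) (E \ {x}) := by
  obtain ⟨hgE, hpart, hdisj, hZne, hWne, hFW, hzero, hrep⟩ := hcert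
  have hxW : x ∉ W := Finset.disjoint_left.mp hdisj hx
  have hZE : Z ⊆ E \ {g} := by rw [hpart]; exact Finset.subset_union_left
  have hxE : x ∈ E := (Finset.mem_sdiff.mp (hZE hx)).1
  have hxg : x ≠ g := fun h => (Finset.mem_sdiff.mp (hZE hx)).2 (Finset.mem_singleton.mpr h)
  obtain ⟨hM1, hM2⟩ := transfer hPM hgE hpart hFW hzero hrep hx hxW
  by_contra hnc
  unfold Conn at hnc
  push_neg at hnc
  obtain ⟨X, hXsub, hXne, hXneG, hXeq⟩ := hnc
  have hgG : g ∈ E \ {x} := Finset.mem_sdiff.mpr ⟨hgE, fun h =>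
    hxg (Finset.mem_singleton.mp h).symm⟩
  have hGx : (E \ {x}) ∪ {x} = E :=
    Finset.sdiff_union_of_subset (Finset.singleton_subset_iff.mpr hxE)
  have heqr : r (X ∪ {x}) + r (((E \ {x}) \ X) ∪ {x}) = r E + r {x} := by
    unfold ctr at hXeq
    rw [hGx] at hXeq
    linarith
  have hpart2 : Disjoint X ((E \ {x}) \ X) := Finset.disjoint_sdiff
  have hXG : X ∪ ((E \ {x}) \ X) = E \ {x} := Finset.union_sdiff_of_subset hXsub
  have hXcne : ((E \ {x}) \ X).Nonempty := by
    rw [Finset.sdiff_nonempty]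
    intro h
    exact hXneG (Finset.Subset.antisymm hXsub h)
  have hXnee : X.Nonempty := hXne
  by_cases hgX : g ∈ X
  · -- S := complement, T := X
    exact core_aux hPM hMconn hgE hpart hdisj hFW hzero hmin hx hM2
      (by rw [Finset.union_comm] at hXG; exact hXG.symm)
      (Finset.disjoint_of_subset_left (le_refl _) hpart2).symm
      hXcne hgX (by linarith)
  · have hgXc : g ∈ (E \ {x}) \ X := Finset.mem_sdiff.mpr ⟨hgG, hgX⟩
    exact core_aux hPM hMconn hgE hpart hdisj hFW hzero hmin hx hM2
      hXG.symm hpart2 hXnee hgXc (by linarith)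

/-- dual rank function relative to ground set `G` -/
def dl (G : Finset α) (r : Finset α → ℤ) : Finset α → ℤ :=
  fun X => 2 * ((X ∩ G).card : ℤ) + r (G \ X) - r G

lemma rank_union_card {r : Finset α → ℤ} {G : Finset α} (hPM : PM r)
    (hrank2 : ∀ e ∈ G, r {e} ≤ 2) (B : Finset α) (hB : B ⊆ G) (A : Finset α) :
    r (A ∪ B) ≤ r A + 2 * (B.card : ℤ) := by
  induction B using Finset.induction_on generalizing A with
  | empty => simp
  | @insert b B hbB ih =>
    have hbG : b ∈ G := hB (Finset.mem_insert_self b B)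
    have hBG : B ⊆ G := fun a ha => hB (Finset.mem_insert_of_mem ha)
    have e1 : A ∪ insert b B = (A ∪ B) ∪ {b} := by
      ext a
      simp only [Finset.mem_union, Finset.mem_insert, Finset.mem_singleton]
      tauto
    have h1 := hPM.submod (A ∪ B) {b}
    have h2 := ih hBG A
    have h3 := hrank2 b hbG
    rw [e1, Finset.card_insert_of_notMem hbB]
    push_cast
    linarith

lemma PM.dl {r : Finset α → ℤ} {G : Finset α} (hPM : PM r)
    (hrank2 : ∀ e ∈ G, r {e} ≤ 2) : PM (dl G r) := by
  constructor
  · show 2 * (((∅ : Finset α) ∩ G).card : ℤ) + r (G \ ∅) - r G = 0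
    rw [Finset.empty_inter, Finset.sdiff_empty]
    simp
  · intro X Y hXY
    show 2 * ((X ∩ G).card : ℤ) + r (G \ X) - r G ≤
      2 * ((Y ∩ G).card : ℤ) + r (G \ Y) - r G
    have e1 : G \ X = (G \ Y) ∪ ((Y \ X) ∩ G) := by
      ext a
      simp only [Finset.mem_union, Finset.mem_sdiff, Finset.mem_inter]
      constructor
      · intro ⟨h1, h2⟩
        by_cases haY : a ∈ Y
        · exact Or.inr ⟨⟨haY, h2⟩, h1⟩
        · exact Or.inl ⟨h1, haY⟩
      · intro h
        rcases h with h | h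
        · exact ⟨h.1, fun hx => h.2 (hXY hx)⟩
        · exact ⟨h.2, h.1.2⟩
    have e2 : (Y ∩ G) = (X ∩ G) ∪ ((Y \ X) ∩ G) := by
      ext a
      simp only [Finset.mem_union, Finset.mem_sdiff, Finset.mem_inter]
      constructor
      · intro ⟨h1, h2⟩
        by_cases haX : a ∈ X
        · exact Or.inl ⟨haX, h2⟩
        · exact Or.inr ⟨⟨h1, haX⟩, h2⟩
      · intro h
        rcases h with h | h
        · exact ⟨hXY h.1, h.2⟩
        · exact ⟨h.1.1, h.2⟩
    have e3 : Disjoint (X ∩ G) ((Y \ X) ∩ G) := by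
      rw [Finset.disjoint_left]
      intro a h1 h2
      rw [Finset.mem_inter] at h1
      rw [Finset.mem_inter, Finset.mem_sdiff] at h2
      exact h2.1.2 h1.1
    have h4 := rank_union_card hPM hrank2 ((Y \ X) ∩ G) Finset.inter_subset_right (G \ Y)
    rw [← e1] at h4
    have h5 : (Y ∩ G).card = (X ∩ G).card + ((Y \ X) ∩ G).card := by
      rw [e2, Finset.card_union_of_disjoint e3]
    rw [h5]
    push_cast
    linarith
  · intro X Y
    show 2 * (((X ∪ Y) ∩ G).card : ℤ) + r (G \ (X ∪ Y)) - r G +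
        (2 * (((X ∩ Y) ∩ G).card : ℤ) + r (G \ (X ∩ Y)) - r G) ≤
      2 * ((X ∩ G).card : ℤ) + r (G \ X) - r G +
        (2 * ((Y ∩ G).card : ℤ) + r (G \ Y) - r G)
    have e1 : G \ (X ∩ Y) = (G \ X) ∪ (G \ Y) := by
      ext a
      simp only [Finset.mem_union, Finset.mem_sdiff, Finset.mem_inter]
      tauto
    have e2 : G \ (X ∪ Y) = (G \ X) ∩ (G \ Y) := by
      ext a
      simp only [Finset.mem_union, Finset.mem_sdiff, Finset.mem_inter]
      tauto
    have h1 := hPM.sub (G \ X) (G \ Y)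
    rw [← e1, ← e2] at h1
    have e3 : (X ∪ Y) ∩ G = (X ∩ G) ∪ (Y ∩ G) := Finset.union_inter_distrib_right X Y G
    have e4 : (X ∩ Y) ∩ G = (X ∩ G) ∩ (Y ∩ G) := by
      ext a
      simp only [Finset.mem_inter]
      tauto
    have h2 := Finset.card_union_add_card_inter (X ∩ G) (Y ∩ G)
    have h3 : ((X ∪ Y) ∩ G).card + ((X ∩ Y) ∩ G).card = (X ∩ G).card + (Y ∩ G).card := by
      rw [e3, e4]; exact h2
    have h4 : (((X ∪ Y) ∩ G).card : ℤ) + (((X ∩ Y) ∩ G).card : ℤ) =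
        ((X ∩ G).card : ℤ) + ((Y ∩ G).card : ℤ) := by exact_mod_cast h3
    linarith

lemma dl_rank2 {r : Finset α → ℤ} {G : Finset α} (hPM : PM r) :
    ∀ e ∈ G, dl G r {e} ≤ 2 := by
  intro e he
  show 2 * ((({e} : Finset α) ∩ G).card : ℤ) + r (G \ {e}) - r G ≤ 2
  have e1 : ({e} : Finset α) ∩ G = {e} := by
    rw [Finset.inter_eq_left]
    exact Finset.singleton_subset_iff.mpr he
  have h1 := hPM.mono (G \ {e}) G Finset.sdiff_subset
  rw [e1, Finset.card_singleton]
  push_cast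
  linarith

lemma dl_dl {r : Finset α → ℤ} {G : Finset α} (hr0 : r ∅ = 0) (X : Finset α)
    (hX : X ⊆ G) : dl G (dl G r) X = r X := by
  show 2 * ((X ∩ G).card : ℤ) +
    (2 * (((G \ X) ∩ G).card : ℤ) + r (G \ (G \ X)) - r G) -
    (2 * ((G ∩ G).card : ℤ) + r (G \ G) - r G) = r X
  have e1 : X ∩ G = X := Finset.inter_eq_left.mpr hX
  have e2 : (G \ X) ∩ G = G \ X := Finset.inter_eq_left.mpr Finset.sdiff_subset
  have e3 : G \ (G \ X) = X := Finset.sdiff_sdiff_eq_self hX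
  have e4 : G \ G = ∅ := Finset.sdiff_self G
  have e5 : (G \ X).card = G.card - X.card := Finset.card_sdiff_of_subset hX
  have e6 : ((G \ X).card : ℤ) = (G.card : ℤ) - (X.card : ℤ) := by
    rw [e5]
    have := Finset.card_le_card hX
    push_cast [this]
    omega
  rw [e1, e2, e3, e4, Finset.inter_self, hr0, e6]
  ring

lemma conn_dl {r : Finset α → ℤ} {G : Finset α} (hr0 : r ∅ = 0) :
    Conn (dl G r) G ↔ Conn r G := by
  have key : ∀ X ⊆ G, dl G r X + dl G r (G \ X) - dl G r G =
      r X + r (G \ X) - r G := by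
    intro X hX
    show 2 * ((X ∩ G).card : ℤ) + r (G \ X) - r G +
      (2 * (((G \ X) ∩ G).card : ℤ) + r (G \ (G \ X)) - r G) -
      (2 * ((G ∩ G).card : ℤ) + r (G \ G) - r G) = r X + r (G \ X) - r G
    have e1 : X ∩ G = X := Finset.inter_eq_left.mpr hX
    have e2 : (G \ X) ∩ G = G \ X := Finset.inter_eq_left.mpr Finset.sdiff_subset
    have e3 : G \ (G \ X) = X := Finset.sdiff_sdiff_eq_self hX
    have e6 : ((G \ X).card : ℤ) = (G.card : ℤ) - (X.card : ℤ) := by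
      rw [Finset.card_sdiff_of_subset hX]
      have := Finset.card_le_card hX
      push_cast [this]
      omega
    rw [e1, e2, e3, Finset.sdiff_self, Finset.inter_self, hr0, e6]
    ring
  constructor
  · intro h X hX h1 h2 heq
    refine h X hX h1 h2 ?_
    have := key X hX
    linarith
  · intro h X hX h1 h2 heq
    refine h X hX h1 h2 ?_
    have := key X hX
    linarith

lemma IsMinor_congr_r {ρ₁ ρ₂ σ : Finset α → ℤ} {G F : Finset α}
    (hcongr : ∀ X ⊆ G, ρ₁ X = ρ₂ X) (h : IsMinor ρ₁ G σ F) : IsMinor ρ₂ G σ F := by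
  obtain ⟨C, D, hC, hD, hdisj, hF, hEq⟩ := h
  refine ⟨C, D, hC, hD, hdisj, hF, fun X hX => ?_⟩
  have hFG : F ⊆ G := by rw [hF]; exact Finset.sdiff_subset
  rw [hEq X hX, hcongr (X ∪ C) (Finset.union_subset ((hX.trans hFG)) hC), hcongr C hC]

lemma IsMinor_congr_s {ρ σ₁ σ₂ : Finset α → ℤ} {G F : Finset α}
    (hcongr : ∀ X ⊆ F, σ₁ X = σ₂ X) (h : IsMinor ρ G σ₁ F) : IsMinor ρ G σ₂ F := by
  obtain ⟨C, D, hC, hD, hdisj, hF, hEq⟩ := h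
  exact ⟨C, D, hC, hD, hdisj, hF, fun X hX => (hcongr X hX).symm.trans (hEq X hX)⟩

lemma Conn_congr {ρ₁ ρ₂ : Finset α → ℤ} {G : Finset α}
    (hcongr : ∀ X ⊆ G, ρ₁ X = ρ₂ X) (h : Conn ρ₁ G) : Conn ρ₂ G := by
  intro X hX h1 h2 heq
  refine h X hX h1 h2 ?_
  rw [hcongr X hX, hcongr (G \ X) Finset.sdiff_subset, hcongr G (subset_refl G)]
  exact heq

/-- duality of minors -/
lemma minor_dl {ρ σ : Finset α → ℤ} {G F : Finset α} (h : IsMinor ρ G σ F) :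
    IsMinor (dl G ρ) G (dl F σ) F := by
  obtain ⟨C, D, hC, hD, hdisj, hF, hEq⟩ := h
  have hFG : F ⊆ G := by rw [hF]; exact Finset.sdiff_subset
  have hFC : ∀ a ∈ F, a ∉ C := by
    intro a ha hc
    rw [hF, Finset.mem_sdiff] at ha
    exact ha.2 (Finset.mem_union_left _ hc)
  have hFD : ∀ a ∈ F, a ∉ D := by
    intro a ha hd
    rw [hF, Finset.mem_sdiff] at ha
    exact ha.2 (Finset.mem_union_right _ hd)
  refine ⟨D, C, hD, hC, hdisj.symm, by rw [hF, Finset.union_comm], fun T hT => ?_⟩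
  have hTG : T ⊆ G := hT.trans hFG
  have e1 : (T ∪ D) ∩ G = T ∪ D := Finset.inter_eq_left.mpr (Finset.union_subset hTG hD)
  have e2 : D ∩ G = D := Finset.inter_eq_left.mpr hD
  have e3 : G \ (T ∪ D) = (F \ T) ∪ C := by
    rw [hF]
    ext a
    simp only [Finset.mem_sdiff, Finset.mem_union]
    constructor
    · intro ⟨h1, h2⟩
      by_cases haC : a ∈ C
      · exact Or.inr haC
      · exact Or.inl ⟨⟨h1, by tauto⟩, fun h => h2 (Or.inl h)⟩
    · intro h
      rcases h with h | h
      · obtain ⟨⟨h1, h2⟩, h3⟩ := h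
        exact ⟨h1, by tauto⟩
      · refine ⟨hC h, fun hh => ?_⟩
        rcases hh with hh | hh
        · exact hFC a (hT hh) h
        · exact Finset.disjoint_left.mp hdisj h hh
  have e4 : G \ D = F ∪ C := by
    rw [hF]
    ext a
    simp only [Finset.mem_sdiff, Finset.mem_union]
    constructor
    · intro ⟨h1, h2⟩
      by_cases haC : a ∈ C
      · exact Or.inr haC
      · exact Or.inl ⟨h1, by tauto⟩
    · intro h
      rcases h with h | h
      · obtain ⟨h1, h2⟩ := h
        exact ⟨h1, by tauto⟩
      · exact ⟨hC h, fun hh => Finset.disjoint_left.mp hdisj h hh⟩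
  have e5 : T ∩ F = T := Finset.inter_eq_left.mpr hT
  have e6 : (T ∪ D).card = T.card + D.card := by
    rw [Finset.card_union_of_disjoint]
    rw [Finset.disjoint_left]
    intro a ha
    exact hFD a (hT ha)
  show 2 * ((T ∩ F).card : ℤ) + σ (F \ T) - σ F =
    2 * (((T ∪ D) ∩ G).card : ℤ) + ρ (G \ (T ∪ D)) - ρ G -
      (2 * ((D ∩ G).card : ℤ) + ρ (G \ D) - ρ G)
  rw [e1, e2, e3, e4, e5, e6, hEq (F \ T) Finset.sdiff_subset, hEq F (subset_refl F)]
  push_cast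
  ring

/-- undualize a minor statement -/
lemma undual_minor {ρ σ : Finset α → ℤ} {G F : Finset α} (hr0 : ρ ∅ = 0)
    (hs0 : σ ∅ = 0) (h : IsMinor (dl G ρ) G (dl F σ) F) : IsMinor ρ G σ F := by
  have h2 := minor_dl h
  have h3 := IsMinor_congr_r (fun X hX => dl_dl hr0 X hX) h2
  exact IsMinor_congr_s (fun X hX => dl_dl hs0 X hX) h3

lemma ctr_dl {r : Finset α → ℤ} {E : Finset α} {x : α} (hx : x ∈ E) :
    ∀ X ⊆ E \ {x}, ctr (dl E r) x X = dl (E \ {x}) r X := by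
  intro X hX
  have hXE : X ⊆ E := hX.trans Finset.sdiff_subset
  have hxX : x ∉ X := fun h => (Finset.mem_sdiff.mp (hX h)).2 (Finset.mem_singleton.mpr rfl)
  show 2 * (((X ∪ {x}) ∩ E).card : ℤ) + r (E \ (X ∪ {x})) - r E -
      (2 * ((({x} : Finset α) ∩ E).card : ℤ) + r (E \ {x}) - r E) =
    2 * ((X ∩ (E \ {x})).card : ℤ) + r ((E \ {x}) \ X) - r (E \ {x})
  have e1 : (X ∪ {x}) ∩ E = X ∪ {x} := Finset.inter_eq_left.mpr
    (Finset.union_subset hXE (Finset.singleton_subset_iff.mpr hx))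
  have e2 : ({x} : Finset α) ∩ E = {x} := Finset.inter_eq_left.mpr
    (Finset.singleton_subset_iff.mpr hx)
  have e3 : E \ (X ∪ {x}) = (E \ {x}) \ X := by
    ext a
    simp only [Finset.mem_sdiff, Finset.mem_union, Finset.mem_singleton]
    tauto
  have e4 : X ∩ (E \ {x}) = X := Finset.inter_eq_left.mpr hX
  have e5 : (X ∪ {x}).card = X.card + 1 := by
    rw [Finset.card_union_of_disjoint (Finset.disjoint_singleton_right.mpr hxX)]
    simp
  rw [e1, e2, e3, e4, e5, Finset.card_singleton]
  push_cast
  ring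

lemma dl_ctr {r : Finset α → ℤ} {E : Finset α} {g : α} (hg : g ∈ E) :
    ∀ X ⊆ E \ {g}, dl (E \ {g}) (ctr r g) X = dl E r X := by
  intro X hX
  have hXE : X ⊆ E := hX.trans Finset.sdiff_subset
  have hgX : g ∉ X := fun h => (Finset.mem_sdiff.mp (hX h)).2 (Finset.mem_singleton.mpr rfl)
  show 2 * ((X ∩ (E \ {g})).card : ℤ) +
      (r (((E \ {g}) \ X) ∪ {g}) - r {g}) - (r ((E \ {g}) ∪ {g}) - r {g}) =
    2 * ((X ∩ E).card : ℤ) + r (E \ X) - r E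
  have e1 : X ∩ (E \ {g}) = X := Finset.inter_eq_left.mpr hX
  have e2 : X ∩ E = X := Finset.inter_eq_left.mpr hXE
  have e3 : ((E \ {g}) \ X) ∪ {g} = E \ X := by
    ext a
    by_cases hag : a = g
    · subst hag
      simp only [Finset.mem_union, Finset.mem_sdiff, Finset.mem_singleton]
      tauto
    · simp only [Finset.mem_union, Finset.mem_sdiff, Finset.mem_singleton, hag]
      tauto
  have e4 : (E \ {g}) ∪ {g} = E :=
    Finset.sdiff_union_of_subset (Finset.singleton_subset_iff.mpr hg)
  rw [e1, e2, e3, e4]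
  ring

/-- facts about a certificate partition -/
lemma part_facts {E : Finset α} {g : α} {Z W : Finset α} (hgE : g ∈ E)
    (hpart : E \ {g} = Z ∪ W) (hdisj : Disjoint Z W) :
    Z ⊆ E ∧ W ⊆ E ∧ g ∉ Z ∧ g ∉ W ∧ E \ Z = W ∪ {g} ∧ E \ W = Z ∪ {g} ∧
    E \ (Z ∪ {g}) = W ∧ E \ (W ∪ {g}) = Z ∧
    ((Z.card : ℤ) + (W.card : ℤ) + 1 = (E.card : ℤ)) := by
  have hZE' : Z ⊆ E \ {g} := by rw [hpart]; exact Finset.subset_union_left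
  have hWE' : W ⊆ E \ {g} := by rw [hpart]; exact Finset.subset_union_right
  have hZE : Z ⊆ E := fun a ha => (Finset.mem_sdiff.mp (hZE' ha)).1
  have hWE : W ⊆ E := fun a ha => (Finset.mem_sdiff.mp (hWE' ha)).1
  have hgZ : g ∉ Z := fun h => (Finset.mem_sdiff.mp (hZE' h)).2 (Finset.mem_singleton.mpr rfl)
  have hgW : g ∉ W := fun h => (Finset.mem_sdiff.mp (hWE' h)).2 (Finset.mem_singleton.mpr rfl)
  have hmem : ∀ a ∈ E, a ≠ g → (a ∈ Z ∨ a ∈ W) := by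
    intro a ha hag
    have : a ∈ E \ {g} := Finset.mem_sdiff.mpr ⟨ha, fun h => hag (Finset.mem_singleton.mp h)⟩
    rw [hpart, Finset.mem_union] at this
    exact this
  refine ⟨hZE, hWE, hgZ, hgW, ?_, ?_, ?_, ?_, ?_⟩
  · ext a
    by_cases hag : a = g
    · subst hag
      simp only [Finset.mem_sdiff, Finset.mem_union, Finset.mem_singleton]
      tauto
    · simp only [Finset.mem_sdiff, Finset.mem_union, Finset.mem_singleton, hag]
      constructor
      · intro ⟨h1, h2⟩
        rcases hmem a h1 hag with h | h
        · exact absurd h h2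
        · exact Or.inl h
      · intro h
        rcases h with h | h
        · exact ⟨hWE h, Finset.disjoint_right.mp hdisj h⟩
        · exact h.elim
  · ext a
    by_cases hag : a = g
    · subst hag
      simp only [Finset.mem_sdiff, Finset.mem_union, Finset.mem_singleton]
      tauto
    · simp only [Finset.mem_sdiff, Finset.mem_union, Finset.mem_singleton, hag]
      constructor
      · intro ⟨h1, h2⟩
        rcases hmem a h1 hag with h | h
        · exact Or.inl h
        · exact absurd h h2
      · intro h
        rcases h with h | h
        · exact ⟨hZE h, Finset.disjoint_left.mp hdisj h⟩
        · exact h.elim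
  · ext a
    by_cases hag : a = g
    · subst hag
      simp only [Finset.mem_sdiff, Finset.mem_union, Finset.mem_singleton]
      tauto
    · simp only [Finset.mem_sdiff, Finset.mem_union, Finset.mem_singleton, hag]
      constructor
      · intro ⟨h1, h2⟩
        rcases hmem a h1 hag with h | h
        · exact absurd (Or.inl h) h2
        · exact h
      · intro h
        exact ⟨hWE h, fun hh => by
          rcases hh with hh | hh
          · exact Finset.disjoint_right.mp hdisj h hh
          · exact hh⟩
  · ext a
    by_cases hag : a = g
    · subst hag
      simp only [Finset.mem_sdiff, Finset.mem_union, Finset.mem_singleton]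
      tauto
    · simp only [Finset.mem_sdiff, Finset.mem_union, Finset.mem_singleton, hag]
      constructor
      · intro ⟨h1, h2⟩
        rcases hmem a h1 hag with h | h
        · exact h
        · exact absurd (Or.inl h) h2
      · intro h
        exact ⟨hZE h, fun hh => by
          rcases hh with hh | hh
          · exact Finset.disjoint_left.mp hdisj h hh
          · exact hh⟩
  · have h1 : (E \ {g}).card = Z.card + W.card := by
      rw [hpart, Finset.card_union_of_disjoint hdisj]
    have h2 : (E \ {g}).card = E.card - 1 :=
      by rw [Finset.sdiff_singleton_eq_erase, Finset.card_erase_of_mem hgE]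
    have h3 : 1 ≤ E.card := Finset.card_pos.mpr ⟨g, hgE⟩
    omega

/-- a contraction certificate dualizes to a deletion certificate -/
lemma con_to_dualDel {r s : Finset α → ℤ} {E F : Finset α} {g : α} {Z W : Finset α}
    (h : ConCert r s E F g Z W) : DelCert (dl E r) (dl F s) E F g Z W := by
  obtain ⟨hgE, hpart, hdisj, hZne, hWne, hFW, hzero, hrep⟩ := h
  obtain ⟨hZE, hWE, hgZ, hgW, eZ, eW, _, _, hcard⟩ := part_facts hgE hpart hdisj
  refine ⟨hgE, hpart, hdisj, hZne, hWne, hFW, ?_, ?_⟩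
  · show 2 * ((Z ∩ E).card : ℤ) + r (E \ Z) - r E +
        (2 * ((W ∩ E).card : ℤ) + r (E \ W) - r E) =
      2 * (((E \ {g}) ∩ E).card : ℤ) + r (E \ (E \ {g})) - r E
    have e1 : Z ∩ E = Z := Finset.inter_eq_left.mpr hZE
    have e2 : W ∩ E = W := Finset.inter_eq_left.mpr hWE
    have e3 : (E \ {g}) ∩ E = E \ {g} := Finset.inter_eq_left.mpr Finset.sdiff_subset
    have e4 : E \ (E \ {g}) = {g} :=
      Finset.sdiff_sdiff_eq_self (Finset.singleton_subset_iff.mpr hgE)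
    have e5 : ((E \ {g}).card : ℤ) = (E.card : ℤ) - 1 := by
      rw [Finset.sdiff_singleton_eq_erase, Finset.card_erase_of_mem hgE]
      have h3 : 1 ≤ E.card := Finset.card_pos.mpr ⟨g, hgE⟩
      push_cast [h3]
      omega
    rw [e1, e2, e3, e4, e5, eZ, eW]
    linarith
  · exact IsMinor_congr_r (dl_ctr hgE) (minor_dl hrep)

/-- a dual deletion certificate comes from a contraction certificate -/
lemma dualDel_to_con {r s : Finset α → ℤ} {E F : Finset α} {g : α} {Z W : Finset α}
    (hr0 : r ∅ = 0) (hs0 : s ∅ = 0)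
    (h : DelCert (dl E r) (dl F s) E F g Z W) : ConCert r s E F g Z W := by
  obtain ⟨hgE, hpart, hdisj, hZne, hWne, hFW, hzero, hrep⟩ := h
  obtain ⟨hZE, hWE, hgZ, hgW, eZ, eW, _, _, hcard⟩ := part_facts hgE hpart hdisj
  refine ⟨hgE, hpart, hdisj, hZne, hWne, hFW, ?_, ?_⟩
  · have hzero' : 2 * ((Z ∩ E).card : ℤ) + r (E \ Z) - r E +
        (2 * ((W ∩ E).card : ℤ) + r (E \ W) - r E) =
      2 * (((E \ {g}) ∩ E).card : ℤ) + r (E \ (E \ {g})) - r E := hzero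
    have e1 : Z ∩ E = Z := Finset.inter_eq_left.mpr hZE
    have e2 : W ∩ E = W := Finset.inter_eq_left.mpr hWE
    have e3 : (E \ {g}) ∩ E = E \ {g} := Finset.inter_eq_left.mpr Finset.sdiff_subset
    have e4 : E \ (E \ {g}) = {g} :=
      Finset.sdiff_sdiff_eq_self (Finset.singleton_subset_iff.mpr hgE)
    have e5 : ((E \ {g}).card : ℤ) = (E.card : ℤ) - 1 := by
      rw [Finset.sdiff_singleton_eq_erase, Finset.card_erase_of_mem hgE]
      have h3 : 1 ≤ E.card := Finset.card_pos.mpr ⟨g, hgE⟩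
      push_cast [h3]
      omega
    rw [e1, e2, e3, e4, e5, eZ, eW] at hzero'
    linarith
  · have h1 : IsMinor (dl (E \ {g}) (ctr r g)) (E \ {g}) (dl F s) F :=
      IsMinor_congr_r (fun X hX => (dl_ctr hgE X hX).symm) hrep
    have hctr0 : ctr r g ∅ = 0 := by
      show r (∅ ∪ {g}) - r {g} = 0
      rw [Finset.empty_union]; ring
    exact undual_minor hctr0 hs0 h1

/-- a dual contraction certificate comes from a deletion certificate -/
lemma dualCon_to_del {r s : Finset α → ℤ} {E F : Finset α} {g : α} {Z W : Finset α}
    (hr0 : r ∅ = 0) (hs0 : s ∅ = 0)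
    (h : ConCert (dl E r) (dl F s) E F g Z W) : DelCert r s E F g Z W := by
  obtain ⟨hgE, hpart, hdisj, hZne, hWne, hFW, hzero, hrep⟩ := h
  obtain ⟨hZE, hWE, hgZ, hgW, eZ, eW, eZg, eWg, hcard⟩ := part_facts hgE hpart hdisj
  refine ⟨hgE, hpart, hdisj, hZne, hWne, hFW, ?_, ?_⟩
  · have hzero' : 2 * (((Z ∪ {g}) ∩ E).card : ℤ) + r (E \ (Z ∪ {g})) - r E +
        (2 * (((W ∪ {g}) ∩ E).card : ℤ) + r (E \ (W ∪ {g})) - r E) =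
      (2 * ((E ∩ E).card : ℤ) + r (E \ E) - r E) +
      (2 * ((({g} : Finset α) ∩ E).card : ℤ) + r (E \ {g}) - r E) := hzero
    have e1 : (Z ∪ {g}) ∩ E = Z ∪ {g} := Finset.inter_eq_left.mpr
      (Finset.union_subset hZE (Finset.singleton_subset_iff.mpr hgE))
    have e2 : (W ∪ {g}) ∩ E = W ∪ {g} := Finset.inter_eq_left.mpr
      (Finset.union_subset hWE (Finset.singleton_subset_iff.mpr hgE))
    have e6 : ({g} : Finset α) ∩ E = {g} := Finset.inter_eq_left.mpr
      (Finset.singleton_subset_iff.mpr hgE)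
    have e7 : ((Z ∪ {g}).card : ℤ) = (Z.card : ℤ) + 1 := by
      rw [Finset.card_union_of_disjoint (Finset.disjoint_singleton_right.mpr hgZ),
        Finset.card_singleton]
      push_cast
      ring
    have e8 : ((W ∪ {g}).card : ℤ) = (W.card : ℤ) + 1 := by
      rw [Finset.card_union_of_disjoint (Finset.disjoint_singleton_right.mpr hgW),
        Finset.card_singleton]
      push_cast
      ring
    rw [e1, e2, e6, eZg, eWg, Finset.inter_self, Finset.sdiff_self, hr0,
      Finset.card_singleton] at hzero'
    rw [e7, e8] at hzero'
    push_cast at hzero'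
    linarith
  · have h1 : IsMinor (dl (E \ {g}) r) (E \ {g}) (dl F s) F :=
      IsMinor_congr_r (ctr_dl hgE) hrep
    exact undual_minor hr0 hs0 h1

end Splitter

open Splitter in
/-- Main theorem: if `M` is a connected 2-polymatroid with a connected proper minor `N`,
then some `e ∈ E(M) - E(N)` can be deleted or contracted keeping connectivity and
keeping `N` as a minor. -/
theorem splitter_two_polymatroid {α : Type*} [DecidableEq α]
    (E : Finset α) (r : Finset α → ℤ)
    (hr0 : r ∅ = 0)
    (hmono : ∀ X Y : Finset α, X ⊆ Y → r X ≤ r Y)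
    (hsub : ∀ X Y : Finset α, r (X ∪ Y) + r (X ∩ Y) ≤ r X + r Y)
    (hrank2 : ∀ e ∈ E, r {e} ≤ 2)
    (hMconn : Conn r E)
    (F : Finset α) (s : Finset α → ℤ)
    (hminor : IsMinor r E s F)
    (hNconn : Conn s F)
    (hproper : F ≠ E) :
    ∃ e ∈ E \ F,
      (Conn r (E \ {e}) ∧ IsMinor r (E \ {e}) s F) ∨
      (Conn (fun X => r (X ∪ {e}) - r {e}) (E \ {e}) ∧
        IsMinor (fun X => r (X ∪ {e}) - r {e}) (E \ {e}) s F) := by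
  classical
  have hPM : PM r := ⟨hr0, hmono, hsub⟩
  obtain ⟨C, D, hCE, hDE, hCD, hFeq, hEq⟩ := hminor
  have hFE : F ⊆ E := by rw [hFeq]; exact Finset.sdiff_subset
  have hs0 : s ∅ = 0 := by
    rw [hEq ∅ (Finset.empty_subset F), Finset.empty_union]; ring
  by_cases hS : ∃ g Z W, DelCert r s E F g Z W ∨ ConCert r s E F g Z W
  · -- take a minimum certificate
    set Scards : Set ℕ :=
      {n | ∃ g Z W, (DelCert r s E F g Z W ∨ ConCert r s E F g Z W) ∧ Z.card = n}
      with hScards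
    have hSne : Scards.Nonempty := by
      obtain ⟨g, Z, W, h⟩ := hS
      exact ⟨Z.card, g, Z, W, h, rfl⟩
    obtain ⟨g, Z, W, hcert, hcard⟩ := Nat.sInf_mem hSne
    have hmin : ∀ g' Z' W', DelCert r s E F g' Z' W' ∨ ConCert r s E F g' Z' W' →
        Z.card ≤ Z'.card := by
      intro g' Z' W' h'
      rw [hcard]
      exact Nat.sInf_le ⟨g', Z', W', h', rfl⟩
    rcases hcert with hdel | hcon
    · -- the minimum certificate is a deletion certificate: contract any x ∈ Z
      obtain ⟨hgE, hpart, hdisj, hZne, hWne, hFW, hzero, hrep⟩ := hdel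
      obtain ⟨x, hx⟩ := hZne
      obtain ⟨hZE, hWE, hgZ, hgW, _, _, _, _, _⟩ := part_facts hgE hpart hdisj
      have hxW : x ∉ W := Finset.disjoint_left.mp hdisj hx
      have hxF : x ∉ F := fun h => hxW (hFW h)
      have hconn' : Conn (ctr r x) (E \ {x}) :=
        core hPM hMconn ⟨hgE, hpart, hdisj, ⟨x, hx⟩, hWne, hFW, hzero, hrep⟩ hmin hx
      have hmin2 := (transfer hPM hgE hpart hFW hzero hrep hx hxW).2
      exact ⟨x, Finset.mem_sdiff.mpr ⟨hZE hx, hxF⟩, Or.inr ⟨hconn', hmin2⟩⟩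
    · -- it is a contraction certificate: dualize
      have hPMd : PM (dl E r) := hPM.dl hrank2
      have hMconnD : Conn (dl E r) E := (conn_dl hr0).mpr hMconn
      have hdelD : DelCert (dl E r) (dl F s) E F g Z W := con_to_dualDel hcon
      have hminD : ∀ g' Z' W',
          DelCert (dl E r) (dl F s) E F g' Z' W' ∨ ConCert (dl E r) (dl F s) E F g' Z' W' →
          Z.card ≤ Z'.card := by
        intro g' Z' W' h'
        rcases h' with h' | h'
        · exact hmin g' Z' W' (Or.inr (dualDel_to_con hr0 hs0 h'))
        · exact hmin g' Z' W' (Or.inl (dualCon_to_del hr0 hs0 h'))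
      obtain ⟨hgE, hpart, hdisj, hZne, hWne, hFW, hzero, hrep⟩ := hdelD
      obtain ⟨x, hx⟩ := hZne
      obtain ⟨hZE, hWE, hgZ, hgW, _, _, _, _, _⟩ := part_facts hgE hpart hdisj
      have hxW : x ∉ W := Finset.disjoint_left.mp hdisj hx
      have hxF : x ∉ F := fun h => hxW (hFW h)
      have hxE : x ∈ E := hZE hx
      have hconnD : Conn (ctr (dl E r) x) (E \ {x}) :=
        core hPMd hMconnD ⟨hgE, hpart, hdisj, ⟨x, hx⟩, hWne, hFW, hzero, hrep⟩ hminD hx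
      have htransD := (transfer hPMd hgE hpart hFW hzero hrep hx hxW).2
      have hconn2 : Conn (dl (E \ {x}) r) (E \ {x}) := Conn_congr (ctr_dl hxE) hconnD
      have hconn3 : Conn r (E \ {x}) := (conn_dl hr0).mp hconn2
      have hm2 : IsMinor (dl (E \ {x}) r) (E \ {x}) (dl F s) F :=
        IsMinor_congr_r (ctr_dl hxE) htransD
      have hm3 : IsMinor r (E \ {x}) s F := undual_minor hr0 hs0 hm2
      exact ⟨x, Finset.mem_sdiff.mpr ⟨hxE, hxF⟩, Or.inl ⟨hconn3, hm3⟩⟩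
  · -- no certificate exists: the first attempt already works
    have hEFne : (E \ F).Nonempty := by
      rw [Finset.sdiff_nonempty]
      intro h
      exact hproper (Finset.Subset.antisymm hFE h)
    obtain ⟨e₀, he₀⟩ := hEFne
    rw [Finset.mem_sdiff] at he₀
    obtain ⟨heE, heF⟩ := he₀
    have heCD : e₀ ∈ C ∪ D := by
      by_contra h
      exact heF (by rw [hFeq]; exact Finset.mem_sdiff.mpr ⟨heE, h⟩)
    have hGe : (E \ {e₀}) ∪ {e₀} = E :=
      Finset.sdiff_union_of_subset (Finset.singleton_subset_iff.mpr heE)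
    rcases Finset.mem_union.mp heCD with heC | heD
    · -- e₀ ∈ C : contraction works
      have hM1 : IsMinor (ctr r e₀) (E \ {e₀}) s F := by
        refine ⟨C.erase e₀, D, ?_, ?_, ?_, ?_, ?_⟩
        · intro a ha
          rw [Finset.mem_erase] at ha
          exact Finset.mem_sdiff.mpr ⟨hCE ha.2, fun h => ha.1 (Finset.mem_singleton.mp h)⟩
        · intro a ha
          refine Finset.mem_sdiff.mpr ⟨hDE ha, fun h => ?_⟩
          exact (Finset.disjoint_left.mp hCD heC) ((Finset.mem_singleton.mp h) ▸ ha)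
        · exact Finset.disjoint_of_subset_left (Finset.erase_subset e₀ C) hCD
        · rw [hFeq]
          ext a
          by_cases hae : a = e₀
          · subst hae
            simp only [Finset.mem_sdiff, Finset.mem_union, Finset.mem_erase,
              Finset.mem_singleton]
            tauto
          · simp only [Finset.mem_sdiff, Finset.mem_union, Finset.mem_erase,
              Finset.mem_singleton, hae]
            tauto
        · intro T hT
          have hTe : e₀ ∉ T := fun h => heF (hT h)
          have h1 : T ∪ C.erase e₀ ∪ {e₀} = T ∪ C := by
            ext a
            by_cases hae : a = e₀
            · subst hae
              simp only [Finset.mem_union, Finset.mem_erase, Finset.mem_singleton]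
              tauto
            · simp only [Finset.mem_union, Finset.mem_erase, Finset.mem_singleton, hae]
              tauto
          have h2 : C.erase e₀ ∪ {e₀} = C := by
            ext a
            by_cases hae : a = e₀
            · subst hae
              simp only [Finset.mem_union, Finset.mem_erase, Finset.mem_singleton]
              tauto
            · simp only [Finset.mem_union, Finset.mem_erase, Finset.mem_singleton, hae]
              tauto
          show s T = r (T ∪ C.erase e₀ ∪ {e₀}) - r {e₀} - (r (C.erase e₀ ∪ {e₀}) - r {e₀})
          rw [h1, h2, hEq T hT]
          ring
      by_cases hc : Conn (ctr r e₀) (E \ {e₀})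
      · exact ⟨e₀, Finset.mem_sdiff.mpr ⟨heE, heF⟩, Or.inr ⟨hc, hM1⟩⟩
      · exfalso
        apply hS
        unfold Conn at hc
        push_neg at hc
        obtain ⟨X, hXsub, hXne, hXneG, hXeq⟩ := hc
        have hXG : X ∪ ((E \ {e₀}) \ X) = E \ {e₀} := Finset.union_sdiff_of_subset hXsub
        have hXcne : ((E \ {e₀}) \ X).Nonempty := by
          rw [Finset.sdiff_nonempty]
          intro h
          exact hXneG (Finset.Subset.antisymm hXsub h)
        have hXnee : X.Nonempty := hXne
        have heqr : r (X ∪ {e₀}) + r (((E \ {e₀}) \ X) ∪ {e₀}) = r E + r {e₀} := by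
          unfold ctr at hXeq
          rw [hGe] at hXeq
          linarith
        have heqr2 : r (((E \ {e₀}) \ X) ∪ {e₀}) + r (X ∪ {e₀}) = r E + r {e₀} := by
          linarith
        rcases Fside (hPM.ctr e₀) hM1 hNconn X hXsub hXeq with hFX | hFX
        · refine ⟨e₀, X, (E \ {e₀}) \ X, Or.inr ⟨heE, hXG.symm, Finset.disjoint_sdiff,
            hXnee, hXcne, ?_, heqr, hM1⟩⟩
          intro a ha
          have haG : a ∈ E \ {e₀} := Finset.mem_sdiff.mpr ⟨hFE ha, fun h =>
            heF ((Finset.mem_singleton.mp h) ▸ ha)⟩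
          refine Finset.mem_sdiff.mpr ⟨haG, fun h => ?_⟩
          have h2 : a ∈ F ∩ X := Finset.mem_inter.mpr ⟨ha, h⟩
          rw [hFX] at h2
          exact Finset.notMem_empty a h2
        · refine ⟨e₀, (E \ {e₀}) \ X, X, Or.inr ⟨heE, ?_, Finset.sdiff_disjoint,
            hXcne, hXnee, hFX, heqr2, hM1⟩⟩
          rw [Finset.union_comm]
          exact hXG.symm
    · -- e₀ ∈ D : deletion works
      have hM1 : IsMinor r (E \ {e₀}) s F := by
        refine ⟨C, D.erase e₀, ?_, ?_, ?_, ?_, hEq⟩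
        · intro a ha
          refine Finset.mem_sdiff.mpr ⟨hCE ha, fun h => ?_⟩
          exact (Finset.disjoint_left.mp hCD) ((Finset.mem_singleton.mp h) ▸ ha) heD
        · intro a ha
          rw [Finset.mem_erase] at ha
          exact Finset.mem_sdiff.mpr ⟨hDE ha.2, fun h => ha.1 (Finset.mem_singleton.mp h)⟩
        · exact Finset.disjoint_of_subset_right (Finset.erase_subset e₀ D) hCD
        · rw [hFeq]
          ext a
          by_cases hae : a = e₀
          · subst hae
            simp only [Finset.mem_sdiff, Finset.mem_union, Finset.mem_erase,
              Finset.mem_singleton]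
            tauto
          · simp only [Finset.mem_sdiff, Finset.mem_union, Finset.mem_erase,
              Finset.mem_singleton, hae]
            tauto
      by_cases hc : Conn r (E \ {e₀})
      · exact ⟨e₀, Finset.mem_sdiff.mpr ⟨heE, heF⟩, Or.inl ⟨hc, hM1⟩⟩
      · exfalso
        apply hS
        unfold Conn at hc
        push_neg at hc
        obtain ⟨X, hXsub, hXne, hXneG, hXeq⟩ := hc
        have hXG : X ∪ ((E \ {e₀}) \ X) = E \ {e₀} := Finset.union_sdiff_of_subset hXsub
        have hXcne : ((E \ {e₀}) \ X).Nonempty := by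
          rw [Finset.sdiff_nonempty]
          intro h
          exact hXneG (Finset.Subset.antisymm hXsub h)
        have hXnee : X.Nonempty := hXne
        have heqr2 : r ((E \ {e₀}) \ X) + r X = r (E \ {e₀}) := by linarith
        rcases Fside hPM hM1 hNconn X hXsub hXeq with hFX | hFX
        · refine ⟨e₀, X, (E \ {e₀}) \ X, Or.inl ⟨heE, hXG.symm, Finset.disjoint_sdiff,
            hXnee, hXcne, ?_, hXeq, hM1⟩⟩
          intro a ha
          have haG : a ∈ E \ {e₀} := Finset.mem_sdiff.mpr ⟨hFE ha, fun h =>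
            heF ((Finset.mem_singleton.mp h) ▸ ha)⟩
          refine Finset.mem_sdiff.mpr ⟨haG, fun h => ?_⟩
          have h2 : a ∈ F ∩ X := Finset.mem_inter.mpr ⟨ha, h⟩
          rw [hFX] at h2
          exact Finset.notMem_empty a h2
        · refine ⟨e₀, (E \ {e₀}) \ X, X, Or.inl ⟨heE, ?_, Finset.sdiff_disjoint,
            hXcne, hXnee, hFX, heqr2, hM1⟩⟩
          rw [Finset.union_comm]
          exact hXG.symm
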